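/- arXiv:1503.00117 — 5 statements merged into one kernel-verified Lean document; each statement's English description precedes it below -/
import Mathlib

section
/- For every real number u, 2·sin(4πu) - 5·sin(3πu) + 7·sin(πu) = 4·sin(πu)·(4·cos(πu) + 3)·(cos(πu) - 1)². -/
open Real

theorem stmt_6 (u : ℝ) :
    2 * sin (4 * π * u) - 5 * sin (3 * π * u) + 7 * sin (π * u) =
      4 * sin (π * u) * (4 * cos (π * u) + 3) * (cos (π * u) - 1) ^ 2 := by
  have h4 : 4 * π * u = 2 * (2 * (π * u)) := by ring
  have h3 : 3 * π * u = 3 * (π * u) := by ring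
  rw [h4, h3, sin_two_mul, sin_two_mul, cos_two_mul, sin_three_mul]
  have hs := sin_sq_add_cos_sq (π * u)
  linear_combination (20 * sin (π * u)) * hs
end

section
/- For every real number u, sin(5πu) - 7·sin(3πu) + 8·sin(2πu) = 8·sin(πu)·(cos(πu) - 1)²·(2·cos²(πu) + 4·cos(πu) + 1). -/
open Real

theorem stmt_7 (u : ℝ) :
    sin (5 * π * u) - 7 * sin (3 * π * u) + 8 * sin (2 * π * u) =
      8 * sin (π * u) * (cos (π * u) - 1) ^ 2 *
        (2 * cos (π * u) ^ 2 + 4 * cos (π * u) + 1) := by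
  have h5 : 5 * π * u = 2 * (π * u) + 3 * (π * u) := by ring
  have h3 : 3 * π * u = 3 * (π * u) := by ring
  have h2 : 2 * π * u = 2 * (π * u) := by ring
  rw [h5, h3, h2, sin_add, sin_two_mul, cos_two_mul, sin_three_mul, cos_three_mul]
  have hp : sin (π * u) ^ 2 + cos (π * u) ^ 2 = 1 := sin_sq_add_cos_sq _
  linear_combination ((32 - 8 * cos (π * u) ^ 2) * sin (π * u)) * hp
end

section
/- Let N(λ) = #{(m,n) ∈ Z² : (16π²/9)(m² + mn + n²) < λ} be the eigenvalue counting function of the equilateral torus. Then for all λ > 0, N(λ) ≥ (3√3/2)·(λ/(4π)) - (9/(2π))·√λ + 1. -/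
open Real MeasureTheory ENNReal

noncomputable def latt16 (q : ℤ × ℤ) : ℂ :=
  ⟨(q.1 : ℝ) + (q.2 : ℝ) / 2, (q.2 : ℝ) * (Real.sqrt 3 / 2)⟩

noncomputable def rnd16 (z : ℂ) : ℤ × ℤ :=
  (round (z.re - ((round (2 * z.im / Real.sqrt 3) : ℤ) : ℝ) / 2),
    round (2 * z.im / Real.sqrt 3))

lemma round_eq_iff16 {t : ℝ} {k : ℤ} :
    round t = k ↔ (k : ℝ) - 1 / 2 ≤ t ∧ t < (k : ℝ) + 1 / 2 := by
  rw [round_eq, Int.floor_eq_iff]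
  constructor <;> rintro ⟨h1, h2⟩ <;> constructor <;> push_cast at * <;> linarith

lemma normSq_latt16 (q : ℤ × ℤ) :
    Complex.normSq (latt16 q) = (q.1 : ℝ) ^ 2 + (q.1 : ℝ) * (q.2 : ℝ) + (q.2 : ℝ) ^ 2 := by
  have h3 : Real.sqrt 3 ^ 2 = 3 := Real.sq_sqrt (by norm_num)
  simp only [latt16, Complex.normSq_apply]
  nlinarith [h3]

lemma dist_rnd16 (z : ℂ) : ‖z - latt16 (rnd16 z)‖ ≤ Real.sqrt 7 / 4 := by
  have h3 : Real.sqrt 3 ^ 2 = 3 := Real.sq_sqrt (by norm_num)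
  have h3pos : (0:ℝ) < Real.sqrt 3 := by positivity
  set n : ℤ := round (2 * z.im / Real.sqrt 3) with hn
  have h2 : |2 * z.im / Real.sqrt 3 - (n:ℝ)| ≤ 1 / 2 := abs_sub_round _
  have h1 : |z.re - (n:ℝ)/2 - (round (z.re - (n:ℝ)/2) : ℤ)| ≤ 1 / 2 := abs_sub_round _
  have him : |z.im - (n:ℝ) * (Real.sqrt 3 / 2)| ≤ Real.sqrt 3 / 4 := by
    have he : 2 * z.im / Real.sqrt 3 * Real.sqrt 3 = 2 * z.im := by
      field_simp
    rw [abs_le] at h2 ⊢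
    constructor <;> nlinarith [h2.1, h2.2, mul_le_mul_of_nonneg_right h2.1 h3pos.le,
      mul_le_mul_of_nonneg_right h2.2 h3pos.le]
  have hre : |z.re - ((rnd16 z).1 : ℝ) - ((rnd16 z).2 : ℝ)/2| ≤ 1/2 := by
    have : (rnd16 z).2 = n := rfl
    rw [this]
    have : ((rnd16 z).1 : ℝ) = ((round (z.re - (n:ℝ)/2) : ℤ) : ℝ) := rfl
    rw [this]
    convert h1 using 2
    ring
  have hnorm : ‖z - latt16 (rnd16 z)‖ ^ 2 ≤ 7 / 16 := by
    rw [show ‖z - latt16 (rnd16 z)‖ ^ 2 = Complex.normSq (z - latt16 (rnd16 z)) from by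
      rw [Complex.sq_norm], Complex.normSq_apply]
    have hre2 : (z - latt16 (rnd16 z)).re = z.re - ((rnd16 z).1 : ℝ) - ((rnd16 z).2 : ℝ)/2 := by
      simp [latt16, Complex.sub_re]; ring
    have him2 : (z - latt16 (rnd16 z)).im = z.im - ((rnd16 z).2 : ℝ) * (Real.sqrt 3 / 2) := by
      simp [latt16, Complex.sub_im]
    rw [hre2, him2]
    have h7 : ((rnd16 z).2 : ℝ) = (n : ℝ) := rfl
    rw [h7]
    rw [abs_le] at hre him
    nlinarith [hre.1, hre.2, him.1, him.2, h3]
  nlinarith [norm_nonneg (z - latt16 (rnd16 z)), Real.sq_sqrt (show (0:ℝ) ≤ 7 by norm_num),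
    Real.sqrt_nonneg 7, hnorm]

lemma volume_cell16 (q : ℤ × ℤ) :
    volume (rnd16 ⁻¹' {q}) = ENNReal.ofReal (Real.sqrt 3 / 2) := by
  have h3 : Real.sqrt 3 ^ 2 = 3 := Real.sq_sqrt (by norm_num)
  have h3pos : (0:ℝ) < Real.sqrt 3 := by positivity
  have hset : rnd16 ⁻¹' {q} = Complex.measurableEquivRealProd ⁻¹'
      ((Set.Ico ((q.1 : ℝ) - 1/2 + (q.2:ℝ)/2) ((q.1 : ℝ) + 1/2 + (q.2:ℝ)/2)) ×ˢ
        (Set.Ico (((q.2:ℝ) - 1/2) * (Real.sqrt 3 / 2)) (((q.2:ℝ) + 1/2) * (Real.sqrt 3 / 2)))) := by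
    ext z
    simp only [Set.mem_preimage, Set.mem_singleton_iff, Set.mem_prod, Set.mem_Ico,
      Complex.measurableEquivRealProd_apply, rnd16, Prod.ext_iff]
    have key : round (2 * z.im / Real.sqrt 3) = q.2 ↔
        ((q.2:ℝ) - 1/2) * (Real.sqrt 3 / 2) ≤ z.im ∧ z.im < ((q.2:ℝ) + 1/2) * (Real.sqrt 3 / 2) := by
      rw [round_eq_iff16]
      have he : 2 * z.im / Real.sqrt 3 * Real.sqrt 3 = 2 * z.im := by field_simp
      constructor <;> rintro ⟨ha, hb⟩ <;> constructor
      · nlinarith [mul_le_mul_of_nonneg_right ha h3pos.le]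
      · nlinarith [mul_lt_mul_of_pos_right hb h3pos]
      · rw [le_div_iff₀ h3pos]; nlinarith
      · rw [div_lt_iff₀ h3pos]; nlinarith
    constructor
    · rintro ⟨hm, hn⟩
      rw [hn] at hm
      rw [round_eq_iff16] at hm
      refine ⟨⟨by linarith [hm.1], by linarith [hm.2]⟩, (key.mp hn)⟩
    · rintro ⟨⟨ha, hb⟩, him⟩
      have hn : round (2 * z.im / Real.sqrt 3) = q.2 := key.mpr him
      refine ⟨?_, hn⟩
      rw [hn, round_eq_iff16]
      constructor <;> push_cast <;> linarith
  rw [hset, Complex.volume_preserving_equiv_real_prod.measure_preimage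
    ((measurableSet_Ico.prod measurableSet_Ico).nullMeasurableSet)]
  rw [Measure.volume_eq_prod, Measure.prod_prod, Real.volume_Ico, Real.volume_Ico]
  have e1 : ((q.1 : ℝ) + 1/2 + (q.2:ℝ)/2) - ((q.1 : ℝ) - 1/2 + (q.2:ℝ)/2) = 1 := by ring
  have e2 : ((q.2:ℝ) + 1/2) * (Real.sqrt 3 / 2) - ((q.2:ℝ) - 1/2) * (Real.sqrt 3 / 2)
      = Real.sqrt 3 / 2 := by ring
  rw [e1, e2]
  simp

set_option maxHeartbeats 2000000 in
theorem stmt_16 (lam : ℝ) (hlam : 0 < lam) :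
    ((({p : ℤ × ℤ | (16 * π ^ 2 / 9) * ((p.1 : ℝ) ^ 2 + p.1 * p.2 + p.2 ^ 2) < lam}).ncard : ℝ)) ≥
      (3 * Real.sqrt 3 / 2) * (lam / (4 * π)) - (9 / (2 * π)) * Real.sqrt lam + 1 := by
  have hπ : (0:ℝ) < π := Real.pi_pos
  have h3 : Real.sqrt 3 ^ 2 = 3 := Real.sq_sqrt (by norm_num)
  have h3pos : (0:ℝ) < Real.sqrt 3 := by positivity
  have h7 : Real.sqrt 7 ^ 2 = 7 := Real.sq_sqrt (by norm_num)
  have h7pos : (0:ℝ) < Real.sqrt 7 := by positivity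
  have h3lo : (1.73:ℝ) ≤ Real.sqrt 3 := by nlinarith
  have h3hi : Real.sqrt 3 ≤ 1.74 := by nlinarith
  have h7lo : (2.64:ℝ) ≤ Real.sqrt 7 := by nlinarith
  have h7hi : Real.sqrt 7 ≤ 2.65 := by nlinarith
  have hπlo : (3.14:ℝ) ≤ π := by linarith [Real.pi_gt_d6]
  have hπhi : π ≤ 3.15 := by linarith [Real.pi_lt_d2]
  set r : ℝ := 3 * Real.sqrt lam / (4 * π) with hr
  have hsl : Real.sqrt lam = 4 * π * r / 3 := by rw [hr]; field_simp
  have hslpos : 0 < Real.sqrt lam := Real.sqrt_pos.mpr hlam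
  have hrpos : 0 < r := by rw [hr]; positivity
  have hlam_eq : lam = 16 * π ^ 2 * r ^ 2 / 9 := by
    have := Real.sq_sqrt hlam.le
    rw [hsl] at this; nlinarith [this]
  -- rewrite the set
  have hSeq : {p : ℤ × ℤ | (16 * π ^ 2 / 9) * ((p.1 : ℝ) ^ 2 + p.1 * p.2 + p.2 ^ 2) < lam}
      = {p : ℤ × ℤ | (p.1 : ℝ) ^ 2 + p.1 * p.2 + p.2 ^ 2 < r ^ 2} := by
    ext p
    simp only [Set.mem_setOf_eq]
    rw [hlam_eq]
    constructor <;> intro h <;> nlinarith [sq_nonneg π, hπ]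
  rw [hSeq]
  set S := {p : ℤ × ℤ | (p.1 : ℝ) ^ 2 + p.1 * p.2 + p.2 ^ 2 < r ^ 2} with hS
  -- finiteness
  have hfin : S.Finite := by
    apply Set.Finite.subset ((Set.finite_Icc (-⌈2*r⌉) ⌈2*r⌉).prod (Set.finite_Icc (-⌈2*r⌉) ⌈2*r⌉))
    rintro ⟨m, n⟩ hmn
    simp only [hS, Set.mem_setOf_eq] at hmn
    have hc : (2*r : ℝ) ≤ (⌈2*r⌉ : ℝ) := Int.le_ceil _
    have hcpos : (0:ℝ) ≤ (⌈2*r⌉ : ℝ) := le_trans (by positivity) hc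
    have h4 : (2*r)^2 ≤ ((⌈2*r⌉ : ℤ) : ℝ)^2 := pow_le_pow_left₀ (by positivity) hc 2
    have hm2 : ((m:ℝ))^2 ≤ ((⌈2*r⌉ : ℤ) : ℝ)^2 := by
      nlinarith [sq_nonneg ((m:ℝ) + n), sq_nonneg (n:ℝ), sq_nonneg r]
    have hn2 : ((n:ℝ))^2 ≤ ((⌈2*r⌉ : ℤ) : ℝ)^2 := by
      nlinarith [sq_nonneg ((m:ℝ) + n), sq_nonneg (m:ℝ), sq_nonneg r]
    obtain ⟨hm3, hm4⟩ := abs_le_of_sq_le_sq' hm2 hcpos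
    obtain ⟨hn3, hn4⟩ := abs_le_of_sq_le_sq' hn2 hcpos
    have g1 : -⌈2*r⌉ ≤ m := by exact_mod_cast hm3
    have g2 : m ≤ ⌈2*r⌉ := by exact_mod_cast hm4
    have g3 : -⌈2*r⌉ ≤ n := by exact_mod_cast hn3
    have g4 : n ≤ ⌈2*r⌉ := by exact_mod_cast hn4
    exact ⟨⟨g1, g2⟩, ⟨g3, g4⟩⟩
  obtain ⟨T, hT⟩ := hfin.exists_finset_coe
  have hcard : (S.ncard : ℝ) = (T.card : ℝ) := by
    rw [← hT, Set.ncard_coe_finset]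
  -- reduce RHS to r
  have hRHS : (3 * Real.sqrt 3 / 2) * (lam / (4 * π)) - (9 / (2 * π)) * Real.sqrt lam + 1
      = 2 * Real.sqrt 3 * π * r ^ 2 / 3 - 6 * r + 1 := by
    rw [hsl, hlam_eq]; field_simp; ring
  rw [hRHS, hcard]
  by_cases hr1 : r < 1
  · -- trivial case
    have h00 : ((0,0) : ℤ × ℤ) ∈ S := by
      simp only [hS, Set.mem_setOf_eq]
      push_cast
      norm_num
      positivity
    have hpos : 0 < T.card := by
      rw [Finset.card_pos]
      exact ⟨(0,0), (by rw [← hT] at h00; exact h00)⟩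
    have h1T : (1:ℝ) ≤ T.card := by exact_mod_cast hpos
    have hAr : r^2 ≤ r := by nlinarith
    have hB : 2*Real.sqrt 3*π ≤ 11 := by nlinarith
    have h2 : 2*Real.sqrt 3*π*r^2 ≤ 11 * r^2 := by nlinarith [sq_nonneg r]
    have h3' : 11*r^2 ≤ 11*r := by linarith
    linarith
  · push_neg at hr1
    -- main counting argument
    set s : ℝ := r - Real.sqrt 7 / 4 with hsdef
    have hspos : 0 < s := by rw [hsdef]; nlinarith
    have hsub : Metric.ball (0:ℂ) s ⊆ ⋃ p ∈ T, rnd16 ⁻¹' {p} := by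
      intro z hz
      rw [Metric.mem_ball, dist_zero_right] at hz
      have hd := dist_rnd16 z
      have hlz : ‖latt16 (rnd16 z)‖ < r := by
        calc ‖latt16 (rnd16 z)‖ ≤ ‖z‖ + ‖latt16 (rnd16 z) - z‖ := by
              have := norm_sub_le (latt16 (rnd16 z)) z
              calc ‖latt16 (rnd16 z)‖ = ‖z + (latt16 (rnd16 z) - z)‖ := by
                    congr 1; ring
                _ ≤ ‖z‖ + ‖latt16 (rnd16 z) - z‖ := norm_add_le _ _
          _ = ‖z‖ + ‖z - latt16 (rnd16 z)‖ := by rw [norm_sub_rev]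
          _ < s + Real.sqrt 7 / 4 := add_lt_add_of_lt_of_le hz hd
          _ = r := by rw [hsdef]; ring
      have hmem : rnd16 z ∈ S := by
        simp only [hS, Set.mem_setOf_eq]
        have h1 : ‖latt16 (rnd16 z)‖ ^ 2 < r ^ 2 := by
          nlinarith [norm_nonneg (latt16 (rnd16 z))]
        rw [show ‖latt16 (rnd16 z)‖ ^ 2 = Complex.normSq (latt16 (rnd16 z)) from by
          rw [Complex.sq_norm], normSq_latt16] at h1
        exact h1
      refine Set.mem_biUnion ((by rw [← hT] at hmem; exact hmem)) rfl
    have hvol : ENNReal.ofReal (π * s ^ 2) ≤ ENNReal.ofReal ((T.card : ℝ) * (Real.sqrt 3 / 2)) := by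
      have h1 : volume (Metric.ball (0:ℂ) s) ≤ ∑ p ∈ T, volume (rnd16 ⁻¹' {p}) :=
        (measure_mono hsub).trans (measure_biUnion_finset_le _ _)
      rw [Complex.volume_ball] at h1
      simp only [volume_cell16, Finset.sum_const, nsmul_eq_mul] at h1
      calc ENNReal.ofReal (π * s ^ 2) = ENNReal.ofReal s ^ 2 * NNReal.pi := by
            rw [← ENNReal.ofReal_pow hspos.le, ← ENNReal.ofReal_coe_nnreal]
            rw [← ENNReal.ofReal_mul (by positivity)]
            norm_num [NNReal.coe_real_pi]
            ring_nf
        _ ≤ (T.card : ℝ≥0∞) * ENNReal.ofReal (Real.sqrt 3 / 2) := h1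
        _ = ENNReal.ofReal ((T.card : ℝ) * (Real.sqrt 3 / 2)) := by
            rw [ENNReal.ofReal_mul (Nat.cast_nonneg _), ENNReal.ofReal_natCast]
    have hreal : π * s ^ 2 ≤ (T.card : ℝ) * (Real.sqrt 3 / 2) :=
      (ENNReal.ofReal_le_ofReal_iff (mul_nonneg (Nat.cast_nonneg _) (div_nonneg (Real.sqrt_nonneg _) (by norm_num)))).mp hvol
    -- final algebra
    have hexp : (Real.sqrt 3 / 2) * (2 * Real.sqrt 3 * π * r ^ 2 / 3 - 6 * r + 1)
        = π * r ^ 2 - 3 * Real.sqrt 3 * r + Real.sqrt 3 / 2 := by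
      linear_combination (π * r ^ 2 / 3) * h3
    have hπ7 : π * Real.sqrt 7 ≤ 3.15 * 2.65 :=
      mul_le_mul hπhi h7hi h7pos.le (by norm_num)
    have h10 : (3.15 * 2.65 - π * Real.sqrt 7) * (r - 1) ≥ 0 :=
      mul_nonneg (by linarith) (by linarith)
    have h11 : (Real.sqrt 3 - 1.73) * r ≥ 0 := mul_nonneg (by linarith) hrpos.le
    have hfinal : π * s ^ 2 ≥ (Real.sqrt 3 / 2) * (2 * Real.sqrt 3 * π * r ^ 2 / 3 - 6 * r + 1) := by
      rw [hsdef, hexp]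
      nlinarith [h10, h11, hπ7, hπlo, hπhi, h3lo, h3hi, h7lo, h7hi, hrpos.le, hr1]
    nlinarith [hreal, hfinal, h3pos]
end

section
/- Suppose n ≥ 4, λ is a Dirichlet eigenvalue of a planar domain of area A = √3/4 (the equilateral triangle of side 1), λ satisfies both λ ≥ (4π·j₀₁²/√3)·n (Faber–Krahn necessary condition for Courant-sharpness) and (√3/(16π))·λ - (3/(2π))·√λ + 2 - n ≤ 0 (counting-function necessary condition), where j₀₁ is the first positive zero of the Bessel function J₀ (j₀₁ > 2.40). Then n ≤ 40. -/
open Real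

set_option maxHeartbeats 2000000 in
theorem stmt_18 (n : ℕ) (lam j01 : ℝ) (hn : 4 ≤ n) (hj : 2.40 < j01)
    (hFK : lam ≥ (4 * π * j01 ^ 2 / Real.sqrt 3) * n)
    (hcount : (Real.sqrt 3 / (16 * π)) * lam - (3 / (2 * π)) * Real.sqrt lam + 2 - n ≤ 0) :
    n ≤ 40 := by
  by_contra hcon
  push_neg at hcon
  have hn41 : (41 : ℝ) ≤ (n : ℝ) := by exact_mod_cast hcon
  have hπ0 : (0:ℝ) < π := Real.pi_pos
  have hπ1 : (3.141592 : ℝ) < π := Real.pi_gt_d6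
  have hπ2 : π < 3.141593 := Real.pi_lt_d6
  have hs3 : (0:ℝ) < Real.sqrt 3 := by positivity
  have h3sq : (Real.sqrt 3) ^ 2 = 3 := Real.sq_sqrt (by norm_num)
  have h31 : (1.732 : ℝ) < Real.sqrt 3 := by nlinarith [hs3, h3sq]
  have h32 : Real.sqrt 3 < 1.7321 := by nlinarith [hs3, h3sq]
  have hj2 : (5.76 : ℝ) < j01 ^ 2 := by nlinarith
  have hnpos : (0:ℝ) < (n : ℝ) := by linarith
  have hFK' : 4 * π * j01 ^ 2 * (n : ℝ) ≤ lam * Real.sqrt 3 := by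
    have h := hFK
    rw [ge_iff_le, div_mul_eq_mul_div, div_le_iff₀ hs3] at h
    linarith
  have hA : 4 * π * 5.76 * (n : ℝ) ≤ lam * Real.sqrt 3 := by
    nlinarith [mul_pos hπ0 hnpos, hj2, hFK']
  have hB : 16 * π * (n : ℝ) ≤ (25 / 36) * (lam * Real.sqrt 3) := by linarith
  -- lower bound on lam
  have h2 : (72.38 : ℝ) ≤ 4 * π * j01 ^ 2 := by nlinarith
  have h3 : (2967.5 : ℝ) ≤ 4 * π * j01 ^ 2 * (n : ℝ) := by nlinarith
  have hlam : (1713.2 : ℝ) ≤ lam := by nlinarith [hFK', h3, h32]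
  set s := Real.sqrt lam with hsdef
  have hs0 : 0 ≤ s := Real.sqrt_nonneg _
  have hs2 : s ^ 2 = lam := Real.sq_sqrt (by linarith)
  have hs : (41.39 : ℝ) ≤ s := by
    rw [hsdef, show (41.39 : ℝ) = Real.sqrt (41.39 ^ 2) from (Real.sqrt_sq (by norm_num)).symm]
    exact Real.sqrt_le_sqrt (by nlinarith)
  have e : (Real.sqrt 3 / (16 * π) * lam - 3 / (2 * π) * s + 2 - n) * (16 * π)
      = Real.sqrt 3 * lam - 24 * s + 32 * π - 16 * π * (n : ℝ) := by
    field_simp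
    ring
  have hcount' : Real.sqrt 3 * lam - 24 * s + 32 * π - 16 * π * (n : ℝ) ≤ 0 := by
    rw [← e]
    exact mul_nonpos_of_nonpos_of_nonneg (by linarith) (by positivity)
  have hkey : (11 / 36) * (Real.sqrt 3 * lam) + 32 * π ≤ 24 * s := by
    nlinarith [hcount', hB]
  nlinarith [hkey, sq_nonneg (s - 41.39), hs, h31, hπ1, hs2, hlam]
end

section
/- For all real u ∈ [2/15, 4/15] and all θ ∈ (0, π/6], the function BP(u) = -4·sin(π/5)·sin(15πu)·sin(πu + 3π/10 - θ) vanishes if and only if sin(15πu) = 0, i.e. u ∈ {2/15, 1/5, 4/15}; in particular sin(πu + 3π/10 - θ) > 0 on this interval. -/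
open Real

theorem stmt_19 (u θ : ℝ) (hu : u ∈ Set.Icc (2 / 15 : ℝ) (4 / 15))
    (hθ : θ ∈ Set.Ioc (0 : ℝ) (π / 6)) :
    (-4 * sin (π / 5) * sin (15 * π * u) * sin (π * u + 3 * π / 10 - θ) = 0 ↔
      sin (15 * π * u) = 0) ∧
    (sin (15 * π * u) = 0 ↔ u = 2 / 15 ∨ u = 1 / 5 ∨ u = 4 / 15) ∧
    sin (π * u + 3 * π / 10 - θ) > 0 := by
  obtain ⟨hu1, hu2⟩ := hu
  obtain ⟨hθ1, hθ2⟩ := hθ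
  have hπ := Real.pi_pos
  have h3 : sin (π * u + 3 * π / 10 - θ) > 0 := by
    apply Real.sin_pos_of_pos_of_lt_pi
    · nlinarith
    · nlinarith
  have h5 : sin (π / 5) > 0 :=
    Real.sin_pos_of_pos_of_lt_pi (by linarith) (by linarith)
  refine ⟨⟨fun h => ?_, fun h => by rw [h]; ring⟩, ⟨fun h => ?_, fun h => ?_⟩, h3⟩
  · rcases mul_eq_zero.1 h with h' | h'
    · rcases mul_eq_zero.1 h' with h'' | h''
      · rcases mul_eq_zero.1 h'' with h3' | h3'
        · norm_num at h3'
        · linarith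
      · exact h''
    · linarith
  · rw [Real.sin_eq_zero_iff] at h
    obtain ⟨n, hn⟩ := h
    have h15 : (n : ℝ) = 15 * u :=
      mul_right_cancel₀ Real.pi_ne_zero (by linear_combination hn)
    have hn2 : (2 : ℤ) ≤ n := by
      have : (2 : ℝ) ≤ (n : ℝ) := by rw [h15]; linarith
      exact_mod_cast this
    have hn4 : n ≤ 4 := by
      have : (n : ℝ) ≤ 4 := by rw [h15]; linarith
      exact_mod_cast this
    interval_cases n <;> push_cast at h15
    · exact Or.inl (by linarith)
    · exact Or.inr (Or.inl (by linarith))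
    · exact Or.inr (Or.inr (by linarith))
  · rw [Real.sin_eq_zero_iff]
    rcases h with h | h | h
    · exact ⟨2, by rw [h]; push_cast; ring⟩
    · exact ⟨3, by rw [h]; push_cast; ring⟩
    · exact ⟨4, by rw [h]; push_cast; ring⟩
end
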